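/- Assume φ(x,x',y) ∧ amo*(x) is a URC encoding of a constraint f(x,x'), and amo'(x,z) is a PC encoding of AMO(x) with auxiliary variables z which contains no positive literal on any variable of x. Then φ(x,x',y) ∧ amo'(x,z) is a URC encoding of f(x,x'). -/

import Mathlib

set_option autoImplicit false

universe u v

/-- A literal: a boolean variable together with a polarity. -/
structure Lit (V : Type u) where
  var : V
  pos : Bool

/-- The complementary literal. -/
def Lit.negate {V : Type u} (l : Lit V) : Lit V := ⟨l.var, !l.pos⟩

/-- A literal is satisfied by a total assignment. -/
def Lit.eval {V : Type u} (a : V → Bool) (l : Lit V) : Prop := a l.var = l.pos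

/-- A clause is a (finite in all our uses) disjunction of a set of literals. -/
abbrev Clause (V : Type u) := Set (Lit V)

/-- A CNF formula is a conjunction of a set of clauses. -/
abbrev CNF (V : Type u) := Set (Clause V)

/-- A clause is satisfied iff some of its literals is. -/
def Clause.Sat {V : Type u} (a : V → Bool) (C : Clause V) : Prop := ∃ l ∈ C, Lit.eval a l

/-- A CNF formula is satisfied iff all of its clauses are. -/
def CNF.Sat {V : Type u} (a : V → Bool) (φ : CNF V) : Prop := ∀ C ∈ φ, Clause.Sat a C

def CNF.Satisfiable {V : Type u} (φ : CNF V) : Prop := ∃ a : V → Bool, CNF.Sat a φ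

/-- `φ ⊨ l`. -/
def CNF.Entails {V : Type u} (φ : CNF V) (l : Lit V) : Prop :=
  ∀ a : V → Bool, CNF.Sat a φ → Lit.eval a l

/-- A partial assignment, i.e. a set of literals, is consistent if it contains
no complementary pair of literals. -/
def ConsistentPA {V : Type u} (α : Set (Lit V)) : Prop := ∀ l ∈ α, Lit.negate l ∉ α

/-- The set of unit clauses corresponding to a partial assignment `α`;
`φ ∪ paUnits α` represents `φ ∧ α`. -/
def paUnits {V : Type u} (α : Set (Lit V)) : CNF V := (fun l => ({l} : Clause V)) '' α

/-- Derivability by repeated unit resolution: from a clause `C ∋ l` and the unit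
clause `¬l` derive `C \ {l}`.  `UnitDeriv φ ∅` means `φ ⊢₁ ⊥` and
`UnitDeriv φ {l}` means `φ ⊢₁ l`. -/
inductive UnitDeriv {V : Type u} (φ : CNF V) : Clause V → Prop where
  | base {C : Clause V} : C ∈ φ → UnitDeriv φ C
  | step {C : Clause V} (l : Lit V) : l ∈ C → UnitDeriv φ C →
      UnitDeriv φ {Lit.negate l} → UnitDeriv φ (C \ {l})

/-- The set of variables occurring in a CNF formula. -/
def CNF.vars {V : Type u} (φ : CNF V) : Set V := ⋃ C ∈ φ, Lit.var '' C

/-- All literals of `α` are literals on the variables `W`. -/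
def LitsOn {V : Type u} (α : Set (Lit V)) (W : Set V) : Prop := ∀ l ∈ α, l.var ∈ W

/-- `φ` is unit refutation complete on the variables `W`. -/
def URCon {V : Type u} (φ : CNF V) (W : Set V) : Prop :=
  ∀ α : Set (Lit V), ConsistentPA α → LitsOn α W →
    ¬ CNF.Satisfiable (φ ∪ paUnits α) → UnitDeriv (φ ∪ paUnits α) ∅

/-- `φ` is propagation complete on the variables `W`. -/
def PCon {V : Type u} (φ : CNF V) (W : Set V) : Prop :=
  ∀ α : Set (Lit V), ConsistentPA α → LitsOn α W →
    ∀ l : Lit V, l.var ∈ W → CNF.Entails (φ ∪ paUnits α) l →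
      UnitDeriv (φ ∪ paUnits α) {l} ∨ UnitDeriv (φ ∪ paUnits α) ∅

/-- `φ` is a CNF encoding of the function `f` with input variables `X`
(the remaining variables of `φ` being auxiliary); `f` is assumed to depend
only on the values of the variables in `X`. -/
def IsEncodingOn {V : Type u} (φ : CNF V) (X : Set V) (f : (V → Bool) → Prop) : Prop :=
  ∀ a : V → Bool, f a ↔ ∃ b : V → Bool, (∀ x ∈ X, b x = a x) ∧ CNF.Sat b φ

/-- The positive literal on a variable. -/
def posL {V : Type u} (x : V) : Lit V := ⟨x, true⟩
/-- The negative literal on a variable. -/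
def negL {V : Type u} (x : V) : Lit V := ⟨x, false⟩

/-- The at-most-one constraint on the variables in `x`. -/
def AMOpred {V : Type u} (x : Set V) (a : V → Bool) : Prop :=
  ∀ u ∈ x, ∀ v ∈ x, a u = true → a v = true → u = v

/-- `amo*(x)`: the canonical representation of the at-most-one constraint,
consisting of all its prime implicates `¬u ∨ ¬v` for distinct `u, v ∈ x`. -/
def amoStar {V : Type u} (x : Set V) : CNF V :=
  {C | ∃ u ∈ x, ∃ v ∈ x, u ≠ v ∧ C = ({negL u, negL v} : Clause V)}


section Helpers
variable {V : Type u}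

theorem UnitDeriv.mono {φ ψ : CNF V} (h : φ ⊆ ψ) {C : Clause V}
    (d : UnitDeriv φ C) : UnitDeriv ψ C := by
  induction d with
  | base hC => exact .base (h hC)
  | step l hl _ _ ihC ihu => exact .step l hl ihC ihu

theorem UnitDeriv.subst {ψ₀ ψ : CNF V} {S : Set (Lit V)}
    (hsub : ψ₀ ⊆ ψ) (hS : ∀ l ∈ S, UnitDeriv ψ {l})
    {C : Clause V} (d : UnitDeriv (ψ₀ ∪ paUnits S) C) : UnitDeriv ψ C := by
  induction d with
  | base hC =>
    rcases hC with h | h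
    · exact .base (hsub h)
    · obtain ⟨l, hl, rfl⟩ := h
      exact hS l hl
  | step l hl _ _ ihC ihu => exact .step l hl ihC ihu

theorem UnitDeriv.sound {φ : CNF V} {C : Clause V} (d : UnitDeriv φ C)
    {a : V → Bool} (ha : CNF.Sat a φ) : Clause.Sat a C := by
  induction d with
  | base hC => exact ha _ hC
  | step l hl _ _ ihC ihu =>
    obtain ⟨m, hm, hme⟩ := ihC
    by_cases hml : m = l
    · subst hml
      obtain ⟨n, hn, hne⟩ := ihu
      rw [Set.mem_singleton_iff] at hn; subst hn
      exfalso
      simp only [Lit.eval, Lit.negate] at hme hne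
      rw [hme] at hne
      exact absurd hne (by simp)
    · exact ⟨m, ⟨hm, hml⟩, hme⟩

theorem UnitDeriv.unsat {φ : CNF V} (d : UnitDeriv φ ∅) : ¬ CNF.Satisfiable φ := by
  rintro ⟨a, ha⟩
  obtain ⟨l, hl, -⟩ := d.sound ha
  exact hl

theorem sat_congr {φ : CNF V} {a b : V → Bool}
    (h : ∀ v ∈ CNF.vars φ, a v = b v) (ha : CNF.Sat a φ) : CNF.Sat b φ := by
  intro C hC
  obtain ⟨l, hl, he⟩ := ha C hC
  refine ⟨l, hl, ?_⟩
  have hv : l.var ∈ CNF.vars φ := by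
    simp only [CNF.vars, Set.mem_iUnion]
    exact ⟨C, hC, ⟨l, hl, rfl⟩⟩
  simpa only [Lit.eval, ← h _ hv] using he

theorem pc_to_urc {φ : CNF V} {W : Set V} (hv : CNF.vars φ ⊆ W)
    (hpc : PCon φ W) : URCon φ W := by
  intro α hcons hon hunsat
  by_cases hW : ∃ w, w ∈ W
  · obtain ⟨w, hw⟩ := hW
    have hent : ∀ p : Bool, CNF.Entails (φ ∪ paUnits α) ⟨w, p⟩ := by
      intro p a hsat; exact absurd ⟨a, hsat⟩ hunsat
    have h1 := hpc α hcons hon ⟨w, true⟩ hw (hent true)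
    have h2 := hpc α hcons hon ⟨w, false⟩ hw (hent false)
    rcases h1 with h1 | h1
    · rcases h2 with h2 | h2
      · have h3 := UnitDeriv.step (φ := φ ∪ paUnits α) (⟨w, true⟩ : Lit V)
          (Set.mem_singleton _) h1 (by simpa [Lit.negate] using h2)
        simpa using h3
      · exact h2
    · exact h1
  · push_neg at hW
    have hα : ∀ l : Lit V, l ∉ α := fun l hl => hW _ (hon l hl)
    have : ¬ CNF.Sat (fun _ => true) (φ ∪ paUnits α) := fun hs => hunsat ⟨_, hs⟩
    simp only [CNF.Sat, not_forall] at this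
    obtain ⟨C, hC, hCs⟩ := this
    rcases hC with hC | hC
    · have hCe : C = ∅ := by
        ext l
        simp only [Set.mem_empty_iff_false, iff_false]
        intro hl
        exact hW l.var (hv (by simp only [CNF.vars, Set.mem_iUnion]; exact ⟨C, hC, ⟨l, hl, rfl⟩⟩))
      exact hCe ▸ UnitDeriv.base (Or.inl hC)
    · obtain ⟨l, hl, -⟩ := hC
      exact absurd hl (hα l)

theorem amoP_of_star {x : Set V} {b : V → Bool} (h : CNF.Sat b (amoStar x)) :
    AMOpred x b := by
  intro u hu v hv hbu hbv
  by_contra hne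
  obtain ⟨m, hm, hme⟩ := h _ ⟨u, hu, v, hv, hne, rfl⟩
  rcases hm with rfl | hm
  · simp [Lit.eval, negL, hbu] at hme
  · rw [Set.mem_singleton_iff] at hm; subst hm
    simp [Lit.eval, negL, hbv] at hme

theorem star_sat_of_amoP {x : Set V} {b : V → Bool} (h : AMOpred x b) :
    CNF.Sat b (amoStar x) := by
  rintro C ⟨u, hu, v, hv, hne, rfl⟩
  by_cases hbu : b u = true
  · refine ⟨negL v, Or.inr rfl, ?_⟩
    simp only [Lit.eval, negL]
    by_contra hbv
    exact hne (h u hu v hv hbu (by revert hbv; cases b v <;> simp))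
  · exact ⟨negL u, Or.inl rfl, by simp only [Lit.eval, negL]; revert hbu; cases b u <;> simp⟩

end Helpers

theorem stmt1 {V : Type u} (x x' y z : Set V)
    (hxx' : Disjoint x x') (hxy : Disjoint x y) (hxz : Disjoint x z)
    (hx'y : Disjoint x' y) (hx'z : Disjoint x' z) (hyz : Disjoint y z)
    (φ amo' : CNF V)
    (hφv : CNF.vars φ ⊆ x ∪ x' ∪ y)
    (hamo'v : CNF.vars amo' ⊆ x ∪ z)
    (f : (V → Bool) → Prop)
    (hf : ∀ a b : V → Bool, (∀ v ∈ x ∪ x', a v = b v) → (f a ↔ f b))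
    (henc : IsEncodingOn (φ ∪ amoStar x) (x ∪ x') f)
    (hurc : URCon (φ ∪ amoStar x) (x ∪ x' ∪ y))
    (henc' : IsEncodingOn amo' x (AMOpred x))
    (hpc' : PCon amo' (x ∪ z))
    (hnopos : ∀ C ∈ amo', ∀ l ∈ C, l.var ∈ x → l.pos = false) :
    IsEncodingOn (φ ∪ amo') (x ∪ x') f ∧ URCon (φ ∪ amo') (x ∪ x' ∪ y ∪ z) := by
  classical
  have hxzl := Set.disjoint_left.mp hxz
  have hx'zl := Set.disjoint_left.mp hx'z
  have hyzl := Set.disjoint_left.mp hyz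
  have hnegneg : ∀ w : V, Lit.negate (negL w) = posL w := fun w => rfl
  have hnegpos : ∀ w : V, Lit.negate (posL w) = negL w := fun w => rfl
  have hinv : ∀ m : Lit V, m.negate.negate = m := fun m => by simp [Lit.negate]
  have amoP_of_amo' : ∀ b : V → Bool, CNF.Sat b amo' → AMOpred x b :=
    fun b hb => (henc' b).mpr ⟨b, fun _ _ => rfl, hb⟩
  have hvarmem : ∀ (Φ : CNF V) (C : Clause V) (l : Lit V), C ∈ Φ → l ∈ C →
      l.var ∈ CNF.vars Φ := by
    intro Φ C l hC hl
    simp only [CNF.vars, Set.mem_iUnion]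
    exact ⟨C, hC, ⟨l, hl, rfl⟩⟩
  constructor
  · -- encoding part
    intro a
    rw [henc a]
    constructor
    · rintro ⟨b, hag, hb⟩
      have hbφ : CNF.Sat b φ := fun C hC => hb C (Or.inl hC)
      have hbs : CNF.Sat b (amoStar x) := fun C hC => hb C (Or.inr hC)
      obtain ⟨c, hcb, hc⟩ := (henc' b).mp (amoP_of_star hbs)
      set d : V → Bool := fun v => if v ∈ z then c v else b v with hd
      have hdb : ∀ v ∈ x ∪ x' ∪ y, d v = b v := by
        rintro v ((hv | hv) | hv)
        · simp [hd, hxzl hv]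
        · simp [hd, hx'zl hv]
        · simp [hd, hyzl hv]
      refine ⟨d, ?_, ?_⟩
      · intro v hv
        rw [hdb v (Or.inl hv)]; exact hag v hv
      · rintro C (hC | hC)
        · exact sat_congr (fun v hv => (hdb v (hφv hv)).symm) hbφ C hC
        · refine sat_congr (a := c) (fun v hv => ?_) hc C hC
          rcases hamo'v hv with hv | hv
          · rw [hdb v (Or.inl (Or.inl hv))]; exact hcb v hv
          · simp [hd, hv]
    · rintro ⟨b, hag, hb⟩
      have hbφ : CNF.Sat b φ := fun C hC => hb C (Or.inl hC)
      have hba : CNF.Sat b amo' := fun C hC => hb C (Or.inr hC)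
      exact ⟨b, hag, fun C hC =>
        hC.elim (hbφ C) (star_sat_of_amoP (amoP_of_amo' b hba) C)⟩
  · -- URC part
    intro α hcons hon hunsat
    set ψ : CNF V := (φ ∪ amo') ∪ paUnits α with hψ
    set αxz : Set (Lit V) := {l ∈ α | l.var ∈ x ∪ z} with hαxzdef
    have hαxz_sub : αxz ⊆ α := fun l hl => hl.1
    have hαxz_cons : ConsistentPA αxz :=
      fun l hl hneg => hcons l (hαxz_sub hl) (hαxz_sub hneg)
    have hαxz_on : LitsOn αxz (x ∪ z) := fun l hl => hl.2
    have hpa_sub : paUnits αxz ⊆ paUnits α := Set.image_mono hαxz_sub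
    have hamo'_sub : amo' ∪ paUnits αxz ⊆ ψ := by
      rintro C (hC | hC)
      · exact Or.inl (Or.inr hC)
      · exact Or.inr (hpa_sub hC)
    by_cases hsat : CNF.Satisfiable (amo' ∪ paUnits αxz)
    case neg =>
      exact (pc_to_urc hamo'v hpc' αxz hαxz_cons hαxz_on hsat).mono hamo'_sub
    case pos =>
    have hunitval : ∀ (a : V → Bool) (S : Set (Lit V)) (l : Lit V), l ∈ S →
        CNF.Sat a (amo' ∪ paUnits S) → Lit.eval a l := by
      intro a S l hl hsa
      obtain ⟨m, hm, hme⟩ := hsa {l} (Or.inr (Set.mem_image_of_mem _ hl))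
      rw [Set.mem_singleton_iff] at hm; subst hm; exact hme
    have hNder : ∀ u ∈ x, CNF.Entails (amo' ∪ paUnits αxz) (negL u) →
        UnitDeriv ψ {negL u} := by
      intro u hu hent
      rcases hpc' αxz hαxz_cons hαxz_on (negL u) (Or.inl hu) hent with h | h
      · exact h.mono hamo'_sub
      · exact absurd hsat h.unsat
    have hres : ∀ u ∈ x, ∀ v ∈ x, u ≠ v → UnitDeriv ψ {posL u} →
        UnitDeriv ψ {negL v} ∨ UnitDeriv ψ ∅ := by
      intro u hu v hv huv hdu
      by_cases hnu : negL u ∈ α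
      · right
        have h1 : ({negL u} : Clause V) ∈ ψ := Or.inr (Set.mem_image_of_mem _ hnu)
        have h2 := UnitDeriv.step (φ := ψ) (posL u) (Set.mem_singleton _) hdu
          (by rw [hnegpos]; exact UnitDeriv.base h1)
        simpa using h2
      · set γ : Set (Lit V) := insert (posL u) αxz with hγdef
        have hγcons : ConsistentPA γ := by
          rintro m (rfl | hm)
          · rw [hnegpos]
            rintro (habs | habs)
            · exact absurd (congrArg Lit.pos habs) (by simp [posL, negL])
            · exact hnu (hαxz_sub habs)
          · rintro (habs | habs)
            · have hm' : m = negL u := by rw [← hinv m, habs, hnegpos]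
              exact hnu (hαxz_sub (hm' ▸ hm))
            · exact hαxz_cons m hm habs
        have hγon : LitsOn γ (x ∪ z) := by
          rintro m (rfl | hm)
          · exact Or.inl hu
          · exact hαxz_on m hm
        have hγunits : ∀ l ∈ γ, UnitDeriv ψ {l} := by
          rintro l (rfl | hl)
          · exact hdu
          · exact UnitDeriv.base (Or.inr (Set.mem_image_of_mem _ (hαxz_sub hl)))
        have hγsub : amo' ⊆ ψ := fun C hC => Or.inl (Or.inr hC)
        by_cases hs2 : CNF.Satisfiable (amo' ∪ paUnits γ)
        · have hent : CNF.Entails (amo' ∪ paUnits γ) (negL v) := by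
            intro a hsa
            have hP := amoP_of_amo' a (fun C hC => hsa C (Or.inl hC))
            have hau : a u = true := hunitval a γ (posL u) (Set.mem_insert _ _) hsa
            show a v = (negL v).pos
            by_contra hav
            refine huv (hP u hu v hv hau ?_)
            revert hav; simp only [negL]; cases a v <;> simp
          rcases hpc' γ hγcons hγon (negL v) (Or.inl hv) hent with h | h
          · exact Or.inl (h.subst hγsub hγunits)
          · exact Or.inr (h.subst hγsub hγunits)
        · exact Or.inr ((pc_to_urc hamo'v hpc' γ hγcons hγon hs2).subst hγsub hγunits)
    set N : Set V := {u ∈ x | CNF.Entails (amo' ∪ paUnits αxz) (negL u)} with hNdef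
    set β : Set (Lit V) := {l ∈ α | l.var ∈ x ∪ x' ∪ y} ∪ negL '' N with hβdef
    have hβunits : ∀ l ∈ β, UnitDeriv ψ {l} := by
      rintro l (hl | ⟨u, hu, rfl⟩)
      · exact UnitDeriv.base (Or.inr (Set.mem_image_of_mem _ hl.1))
      · exact hNder u hu.1 hu.2
    have hposN : ∀ u ∈ N, posL u ∉ α := by
      rintro u ⟨hux, hent⟩ habs
      obtain ⟨a, ha⟩ := hsat
      have h1 : a u = (negL u).pos := hent a ha
      have h2 : a u = (posL u).pos := hunitval a αxz (posL u) ⟨habs, Or.inl hux⟩ ha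
      rw [h1] at h2
      exact absurd h2 (by simp [posL, negL])
    have hβcons : ConsistentPA β := by
      rintro m (hm | ⟨u, hu, rfl⟩)
      · rintro (hm2 | ⟨u, hu, heq⟩)
        · exact hcons m hm.1 hm2.1
        · have hmp : m = posL u := by rw [← hinv m, ← heq, hnegneg]
          exact hposN u hu (hmp ▸ hm.1)
      · rw [hnegneg]
        rintro (hm2 | ⟨u', hu', heq⟩)
        · exact hposN u hu hm2.1
        · exact absurd (congrArg Lit.pos heq) (by simp [posL, negL])
    have hβon : LitsOn β (x ∪ x' ∪ y) := by
      rintro l (hl | ⟨u, hu, rfl⟩)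
      · exact hl.2
      · exact Or.inl (Or.inl hu.1)
    have hunsat2 : ¬ CNF.Satisfiable ((φ ∪ amoStar x) ∪ paUnits β) := by
      rintro ⟨b, hb⟩
      have hbφ : CNF.Sat b φ := fun C hC => hb C (Or.inl (Or.inl hC))
      have hbs : AMOpred x b := amoP_of_star (fun C hC => hb C (Or.inl (Or.inr hC)))
      have hbβ : ∀ l ∈ β, Lit.eval b l := by
        intro l hl
        obtain ⟨m, hm, hme⟩ := hb {l} (Or.inr (Set.mem_image_of_mem _ hl))
        rw [Set.mem_singleton_iff] at hm; subst hm; exact hme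
      have hc0 : ∃ c₀ : V → Bool, CNF.Sat c₀ (amo' ∪ paUnits αxz) ∧
          ∀ w ∈ x, c₀ w = false → b w = false := by
        by_cases hu : ∃ u ∈ x, b u = true
        · obtain ⟨u, hux, hbu⟩ := hu
          have hnotent : ¬ CNF.Entails (amo' ∪ paUnits αxz) (negL u) := by
            intro hent
            have h1 : Lit.eval b (negL u) := hbβ (negL u) (Or.inr ⟨u, ⟨hux, hent⟩, rfl⟩)
            simp only [Lit.eval, negL, hbu] at h1
            exact absurd h1 (by simp)
          simp only [CNF.Entails, not_forall] at hnotent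
          obtain ⟨c₀, hc₀, hne⟩ := hnotent
          refine ⟨c₀, hc₀, ?_⟩
          intro w hwx hcw
          have hc0u : c₀ u = true := by
            revert hne; simp only [Lit.eval, negL]; cases c₀ u <;> simp
          by_contra hbw
          have hbw' : b w = true := by revert hbw; cases b w <;> simp
          have hwu : w = u := hbs w hwx u hux hbw' hbu
          rw [hwu, hc0u] at hcw
          exact absurd hcw (by simp)
        · push_neg at hu
          obtain ⟨c₀, hc₀⟩ := hsat
          refine ⟨c₀, hc₀, fun w hw _ => ?_⟩
          have := hu w hw
          revert this; cases b w <;> simp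
      obtain ⟨c₀, hc₀, hkey⟩ := hc0
      have hc₀a : CNF.Sat c₀ amo' := fun C hC => hc₀ C (Or.inl hC)
      set d : V → Bool := fun v => if v ∈ z then c₀ v else b v with hd
      apply hunsat
      refine ⟨d, ?_⟩
      rintro C ((hC | hC) | hC)
      · refine sat_congr (a := b) (fun v hv => ?_) hbφ C hC
        have hvz : v ∉ z := by
          rcases hφv hv with (h | h) | h
          · exact hxzl h
          · exact hx'zl h
          · exact hyzl h
        simp [hd, hvz]
      · obtain ⟨m, hm, hme⟩ := hc₀a C hC
        have hmv : m.var ∈ x ∪ z := hamo'v (hvarmem amo' C m hC hm)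
        rcases hmv with hmv | hmv
        · have hpos : m.pos = false := hnopos C hC m hm hmv
          have hc0m : c₀ m.var = false := by rw [hme, hpos]
          have hbm : b m.var = false := hkey m.var hmv hc0m
          refine ⟨m, hm, ?_⟩
          have hvz : m.var ∉ z := hxzl hmv
          simp [Lit.eval, hd, hvz, hbm, hpos]
        · refine ⟨m, hm, ?_⟩
          simpa [Lit.eval, hd, hmv] using hme
      · obtain ⟨l, hl, rfl⟩ := hC
        refine ⟨l, rfl, ?_⟩
        by_cases hvz : l.var ∈ z
        · have h1 : Lit.eval c₀ l := hunitval c₀ αxz l ⟨hl, Or.inr hvz⟩ hc₀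
          simpa [Lit.eval, hd, hvz] using h1
        · have hlv : l.var ∈ x ∪ x' ∪ y := by
            rcases hon l hl with h | h
            · exact h
            · exact absurd h hvz
          have h1 : Lit.eval b l := hbβ l (Or.inl ⟨hl, hlv⟩)
          simpa [Lit.eval, hd, hvz] using h1
    have hderβ := hurc β hβcons hβon hunsat2
    have hsim : ∀ C : Clause V, UnitDeriv ((φ ∪ amoStar x) ∪ paUnits β) C →
        UnitDeriv ψ ∅ ∨ UnitDeriv ψ C ∨ C ∈ amoStar x := by
      intro C hd
      induction hd with
      | base hC =>
        rcases hC with (hC | hC) | hC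
        · exact Or.inr (Or.inl (UnitDeriv.base (Or.inl (Or.inl hC))))
        · exact Or.inr (Or.inr hC)
        · obtain ⟨l, hl, rfl⟩ := hC
          exact Or.inr (Or.inl (hβunits l hl))
      | step l hl hdC hdu ihC ihu =>
        rcases ihu with h | h | h
        · exact Or.inl h
        · rcases ihC with h2 | h2 | h2
          · exact Or.inl h2
          · exact Or.inr (Or.inl (UnitDeriv.step l hl h2 h))
          · obtain ⟨u, hu, v, hv, huv, rfl⟩ := h2
            rcases hl with rfl | hl
            · have hpu : UnitDeriv ψ {posL u} := by rwa [hnegneg] at h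
              rcases hres u hu v hv huv hpu with h3 | h3
              · refine Or.inr (Or.inl ?_)
                have hset : ({negL u, negL v} : Clause V) \ {negL u} = {negL v} := by
                  ext m
                  simp only [Set.mem_diff, Set.mem_insert_iff, Set.mem_singleton_iff]
                  constructor
                  · rintro ⟨rfl | rfl, hne⟩
                    · exact absurd rfl hne
                    · rfl
                  · rintro rfl
                    exact ⟨Or.inr rfl, fun he => huv (congrArg Lit.var he).symm⟩
                rw [hset]; exact h3
              · exact Or.inl h3
            · rw [Set.mem_singleton_iff] at hl; subst hl
              have hpv : UnitDeriv ψ {posL v} := by rwa [hnegneg] at h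
              rcases hres v hv u hu (Ne.symm huv) hpv with h3 | h3
              · refine Or.inr (Or.inl ?_)
                have hset : ({negL u, negL v} : Clause V) \ {negL v} = {negL u} := by
                  ext m
                  simp only [Set.mem_diff, Set.mem_insert_iff, Set.mem_singleton_iff]
                  constructor
                  · rintro ⟨rfl | rfl, hne⟩
                    · rfl
                    · exact absurd rfl hne
                  · rintro rfl
                    exact ⟨Or.inl rfl, fun he => huv (congrArg Lit.var he)⟩
                rw [hset]; exact h3
              · exact Or.inl h3
        · exfalso
          obtain ⟨u, hu, v, hv, huv, heq⟩ := h
          have h1 : negL u ∈ ({Lit.negate l} : Clause V) := by rw [heq]; exact Or.inl rfl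
          have h2 : negL v ∈ ({Lit.negate l} : Clause V) := by rw [heq]; exact Or.inr rfl
          rw [Set.mem_singleton_iff] at h1 h2
          exact huv (congrArg Lit.var (h1.trans h2.symm))
    rcases hsim ∅ hderβ with h | h | h
    · exact h
    · exact h
    · obtain ⟨u, hu, v, hv, huv, heq⟩ := h
      have : negL u ∈ (∅ : Clause V) := by rw [heq]; exact Or.inl rfl
      exact absurd this (Set.notMem_empty _)
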